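/- arXiv:2603.16353 — 2 statements merged into one kernel-verified Lean document; each statement's English description precedes it below -/
import Mathlib

section
/- Let C : R^D → R^D be the sign-bit quantization map defined by C(g) = sign(g) · ‖g‖₁ / D, where sign is applied componentwise and ‖·‖₁ is the ℓ¹ norm. Then for every g ∈ R^D, ‖C(g) − g‖² ≤ (1 − 1/D)‖g‖². -/
lemma sign_sq_le_one (x : ℝ) : (Real.sign x) ^ 2 ≤ 1 := by
  rcases Real.sign_apply_eq x with h | h | h <;> rw [h] <;> norm_num

lemma real_sign_mul_self' (x : ℝ) : Real.sign x * x = |x| := by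
  rcases lt_trichotomy x 0 with h | h | h
  · rw [Real.sign_of_neg h, abs_of_neg h]; ring
  · simp [h]
  · rw [Real.sign_of_pos h, abs_of_pos h]; ring

lemma euc_norm_sq {D : ℕ} (x : EuclideanSpace ℝ (Fin D)) :
    ‖x‖ ^ 2 = ∑ j, (x j) ^ 2 := by
  rw [EuclideanSpace.norm_eq, Real.sq_sqrt (by positivity)]
  simp [sq_abs]

/-- Sign-bit quantization `C(g) = sign(g) ⬝ ‖g‖₁ / D` satisfies
`‖C(g) − g‖² ≤ (1 − 1/D)‖g‖²`. -/
theorem signbit_quantization_contraction (D : ℕ) (hD : 0 < D)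
    (g : EuclideanSpace ℝ (Fin D)) :
    ‖(show EuclideanSpace ℝ (Fin D) from
        WithLp.toLp 2 (fun j => Real.sign (g j) * (∑ k, |g k|) / (D : ℝ))) - g‖ ^ 2
      ≤ (1 - 1 / (D : ℝ)) * ‖g‖ ^ 2 := by
  have hDpos : (0:ℝ) < D := by exact_mod_cast hD
  set S : ℝ := ∑ k, |g k| with hS
  set T : ℝ := ∑ j, (g j) ^ 2 with hT
  have hS0 : 0 ≤ S := Finset.sum_nonneg fun _ _ => abs_nonneg _
  have hTS : T ≤ S ^ 2 := by
    have := Finset.sum_sq_le_sq_sum_of_nonneg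
      (s := Finset.univ) (f := fun k => |g k|) (fun i _ => abs_nonneg _)
    simpa [sq_abs] using this
  rw [euc_norm_sq, euc_norm_sq]
  have hsub : ∀ j, ((show EuclideanSpace ℝ (Fin D) from
      WithLp.toLp 2 (fun j => Real.sign (g j) * S / (D : ℝ))) - g) j
      = Real.sign (g j) * S / (D : ℝ) - g j := fun j => rfl
  calc ∑ j, (((show EuclideanSpace ℝ (Fin D) from
          WithLp.toLp 2 (fun j => Real.sign (g j) * S / (D : ℝ))) - g) j) ^ 2
      ≤ ∑ j : Fin D, (S ^ 2 / (D:ℝ) ^ 2 - 2 * (S / D) * |g j| + (g j) ^ 2) := by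
        refine Finset.sum_le_sum fun j _ => ?_
        rw [hsub]
        have h1 := sign_sq_le_one (g j)
        have h2 := real_sign_mul_self' (g j)
        have h3 : (0:ℝ) ≤ (S / D) ^ 2 := sq_nonneg _
        have key : ((Real.sign (g j)) ^ 2 - 1) * (S / D) ^ 2 ≤ 0 :=
          mul_nonpos_of_nonpos_of_nonneg (by linarith) h3
        rw [show Real.sign (g j) * S / (D:ℝ) = Real.sign (g j) * (S / D) by ring]
        have hexp : (Real.sign (g j) * (S/D) - g j)^2
            = Real.sign (g j)^2 * (S/D)^2 - 2*(S/D)*(Real.sign (g j) * g j) + (g j)^2 := by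
          ring
        rw [hexp, h2, show S^2/(D:ℝ)^2 = (S/D)^2 by ring]
        nlinarith [mul_le_mul_of_nonneg_right h1 h3]
    _ = T - S ^ 2 / D := by
        rw [Finset.sum_add_distrib, Finset.sum_sub_distrib, ← hT,
          Finset.sum_const, ← Finset.mul_sum, ← hS]
        simp only [Finset.card_univ, Fintype.card_fin, nsmul_eq_mul]
        field_simp
        ring
    _ ≤ (1 - 1 / (D:ℝ)) * T := by
        have hdiv : T / D ≤ S ^ 2 / D := by gcongr
        have heq : (1 - 1 / (D:ℝ)) * T = T - T / D := by ring
        rw [heq]; linarith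
end

section
/- Under a pairwise balanced allocation, let S ∈ {0,1}^{N×M} be an allocation matrix with column sums ∑_{i=1}^N s(i,k) = d_k for all k and ∑_{i=1}^N s(i,k₁)s(i,k₂) = d_{k₁}d_{k₂}/N for all k₁ ≠ k₂. For vectors f_1, ..., f_M in R^D, define g_i = ∑_{k : s(i,k)=1} f_k / d_k. Then ∑_{i=1}^N ‖g_i‖² = ∑_{k=1}^M (1/d_k − 1/N)‖f_k‖² + (1/N)‖∑_{k=1}^M f_k‖². -/
/-- Pairwise balanced allocation identity: with allocation matrix `s ∈ {0,1}^{N×M}`,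
column sums `d k`, pairwise balance `∑ i, s i k₁ * s i k₂ = d k₁ d k₂ / N` for `k₁ ≠ k₂`,
and encoded vectors `g i = ∑_{k : s i k = 1} f k / d k`, we have
`∑ i ‖g i‖² = ∑ k (1/d k − 1/N) ‖f k‖² + (1/N) ‖∑ k f k‖²`. -/
theorem pairwise_balanced_identity (D N M : ℕ) (hN : 0 < N)
    (s : Fin N → Fin M → ℝ) (h01 : ∀ i k, s i k = 0 ∨ s i k = 1)
    (d : Fin M → ℝ) (hd : ∀ k, 0 < d k)
    (hcol : ∀ k, ∑ i, s i k = d k)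
    (hpair : ∀ k₁ k₂, k₁ ≠ k₂ → ∑ i, s i k₁ * s i k₂ = d k₁ * d k₂ / (N : ℝ))
    (f : Fin M → EuclideanSpace ℝ (Fin D)) :
    ∑ i, ‖∑ k, (s i k / d k) • f k‖ ^ 2
      = ∑ k, (1 / d k - 1 / (N : ℝ)) * ‖f k‖ ^ 2 + (1 / (N : ℝ)) * ‖∑ k, f k‖ ^ 2 := by
  have key : ∀ (c : Fin M → ℝ),
      ‖∑ k, c k • f k‖ ^ 2
        = ∑ k₁, ∑ k₂, c k₁ * c k₂ * (inner ℝ (f k₁) (f k₂) : ℝ) := by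
    intro c
    rw [← real_inner_self_eq_norm_sq, sum_inner]
    refine Finset.sum_congr rfl fun k₁ _ => ?_
    rw [inner_sum]
    refine Finset.sum_congr rfl fun k₂ _ => ?_
    rw [real_inner_smul_left, real_inner_smul_right]; ring
  set C : Fin M → Fin M → ℝ := fun k₁ k₂ =>
    (if k₁ = k₂ then 1 / d k₁ - 1 / (N : ℝ) else 0) + 1 / (N : ℝ) with hC
  have hNne : (N : ℝ) ≠ 0 := Nat.cast_ne_zero.mpr hN.ne'
  -- LHS
  have lhs : ∑ i, ‖∑ k, (s i k / d k) • f k‖ ^ 2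
      = ∑ k₁, ∑ k₂, C k₁ k₂ * (inner ℝ (f k₁) (f k₂) : ℝ) := by
    have : ∑ i, ‖∑ k, (s i k / d k) • f k‖ ^ 2
        = ∑ i, ∑ k₁, ∑ k₂,
            (s i k₁ / d k₁) * (s i k₂ / d k₂) * (inner ℝ (f k₁) (f k₂) : ℝ) :=
      Finset.sum_congr rfl fun i _ => key _
    rw [this, Finset.sum_comm]
    refine Finset.sum_congr rfl fun k₁ _ => ?_
    rw [Finset.sum_comm]
    refine Finset.sum_congr rfl fun k₂ _ => ?_
    have hsum : ∀ i, (s i k₁ / d k₁) * (s i k₂ / d k₂) * (inner ℝ (f k₁) (f k₂) : ℝ)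
        = (s i k₁ * s i k₂) * ((inner ℝ (f k₁) (f k₂) : ℝ) / (d k₁ * d k₂)) := by
      intro i; field_simp
    simp only [hsum]
    rw [← Finset.sum_mul]
    by_cases h : k₁ = k₂
    · subst h
      have hsq : ∀ i, s i k₁ * s i k₁ = s i k₁ := by
        intro i; rcases h01 i k₁ with h | h <;> rw [h] <;> ring
      simp only [hsq]
      rw [hcol k₁]
      have : C k₁ k₁ = 1 / d k₁ := by simp [hC]
      rw [this]
      generalize (inner ℝ (f k₁) (f k₁) : ℝ) = t
      have := (hd k₁).ne'
      field_simp
    · rw [hpair k₁ k₂ h]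
      have : C k₁ k₂ = 1 / (N : ℝ) := by simp [hC, h]
      rw [this]
      generalize (inner ℝ (f k₁) (f k₂) : ℝ) = t
      have hd1 := (hd k₁).ne'
      have hd2 := (hd k₂).ne'
      field_simp
  rw [lhs]
  -- RHS
  have rhs2 : ‖∑ k, f k‖ ^ 2 = ∑ k₁, ∑ k₂, (inner ℝ (f k₁) (f k₂) : ℝ) := by
    have := key (fun _ => 1); simpa using this
  rw [rhs2]
  rw [Finset.mul_sum]
  have rhs1 : ∑ k, (1 / d k - 1 / (N : ℝ)) * ‖f k‖ ^ 2
      = ∑ k₁, ∑ k₂, (if k₁ = k₂ then 1 / d k₁ - 1 / (N : ℝ) else 0)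
          * (inner ℝ (f k₁) (f k₂) : ℝ) := by
    refine Finset.sum_congr rfl fun k₁ _ => ?_
    rw [Finset.sum_eq_single k₁]
    · rw [if_pos rfl, real_inner_self_eq_norm_sq]
    · intro b _ hb; rw [if_neg (Ne.symm hb), zero_mul]
    · intro h; exact absurd (Finset.mem_univ k₁) h
  rw [rhs1, ← Finset.sum_add_distrib]
  refine Finset.sum_congr rfl fun k₁ _ => ?_
  rw [Finset.mul_sum, ← Finset.sum_add_distrib]
  refine Finset.sum_congr rfl fun k₂ _ => ?_
  simp only [hC]
  ring
end
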